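/- Algebraic identity underlying the reflected weak formulation: Let n ≥ 2, let U ⊆ ℝ² be open, and let v : U → ℝ^{n+1} be a smooth nowhere-vanishing map and w : U → ℝ^{n+1} any smooth map. Setting σ(z) = z/|z|² and X_{i,j} = 2 (v_j ∇v_i − v_i ∇v_j)/|v|⁴, one has the pointwise identity on U: ⟨∇v, ∇w⟩/|v|² − Σ_{i,j} ⟨X_{i,j}, ∇v_i⟩ w_j = ⟨∇(σ∘v), ∇(w − 2 Σ_j (v_j w_j/|v|²) v)⟩, where ⟨∇a, ∇b⟩ = Σ_k ⟨∇a_k, ∇b_k⟩ for ℝ^{n+1}-valued maps a, b. -/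

import Mathlib

open MeasureTheory Filter Topology Set
open scoped RealInnerProductSpace

noncomputable section

/-- The Euclidean plane. -/
abbrev E2 : Type := EuclideanSpace ℝ (Fin 2)
/-- Euclidean space `ℝ^{n+1}`. -/
abbrev Ey (n : ℕ) : Type := EuclideanSpace ℝ (Fin (n + 1))

/-- Standard basis vectors of the plane. -/
def e2 (i : Fin 2) : E2 := EuclideanSpace.single i 1

/-- The Laplacian of a map on the plane. -/
def lapl {F : Type*} [NormedAddCommGroup F] [NormedSpace ℝ F] (u : E2 → F) (x : E2) : F :=
  ∑ i : Fin 2, fderiv ℝ (fun y => fderiv ℝ u y (e2 i)) x (e2 i)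

/-- The squared (Frobenius) norm `|∇u|² = Σ_j |∇u_j|²` of the gradient. -/
def gradSq {F : Type*} [NormedAddCommGroup F] [NormedSpace ℝ F] (u : E2 → F) (x : E2) : ℝ :=
  ∑ i : Fin 2, ‖fderiv ℝ u x (e2 i)‖ ^ 2

/-- The divergence of a plane vector field. -/
def divE (F : E2 → E2) (x : E2) : ℝ :=
  ∑ i : Fin 2, fderiv ℝ F x (e2 i) i

/-- The composition `σ ∘ u` of `u` with the inversion `σ(z) = z/|z|²` with respect to the
unit sphere. -/
def invmap {n : ℕ} (u : E2 → Ey n) : E2 → Ey n :=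
  fun x => (‖u x‖ ^ 2)⁻¹ • u x

/-- The vector field `X_{i,j} = 2 (v_j ∇v_i − v_i ∇v_j)/|v|⁴`. -/
def Xfield {n : ℕ} (v : E2 → Ey n) (i j : Fin (n + 1)) (x : E2) : E2 :=
  (2 / ‖v x‖ ^ 4) •
    (v x j • gradient (fun y => v y i) x - v x i • gradient (fun y => v y j) x)

variable {n : ℕ} {v w : E2 → Ey n} {x : E2}

theorem diff_proj (hv : DifferentiableAt ℝ v x) (k : Fin (n+1)) :
    DifferentiableAt ℝ (fun y => v y k) x := by
  have : (fun y => v y k) = (EuclideanSpace.proj k) ∘ v := rfl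
  rw [this]; exact (EuclideanSpace.proj k).differentiableAt.comp x hv

theorem fderiv_proj (hv : DifferentiableAt ℝ v x) (k : Fin (n+1)) (u : E2) :
    fderiv ℝ (fun y => v y k) x u = fderiv ℝ v x u k := by
  have : (fun y => v y k) = (EuclideanSpace.proj k) ∘ v := rfl
  rw [this, fderiv_comp x (EuclideanSpace.proj k).differentiableAt hv, ContinuousLinearMap.fderiv]
  simp

theorem fderiv_normsq (hv : DifferentiableAt ℝ v x) (u : E2) :
    fderiv ℝ (fun y => ‖v y‖^2) x u = 2 * ∑ k, v x k * fderiv ℝ v x u k := by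
  simp_rw [← real_inner_self_eq_norm_sq]
  rw [fderiv_inner_apply ℝ hv hv]
  simp only [PiLp.inner_apply, RCLike.inner_apply, conj_trivial]
  rw [Finset.mul_sum, ← Finset.sum_add_distrib]
  exact Finset.sum_congr rfl fun k _ => by ring

theorem diff_normsq (hv : DifferentiableAt ℝ v x) :
    DifferentiableAt ℝ (fun y => ‖v y‖^2) x := by
  simp_rw [← real_inner_self_eq_norm_sq]
  exact hv.inner ℝ hv

theorem fderiv_inv_comp {ρ : E2 → ℝ} (hρ : DifferentiableAt ℝ ρ x) (hne : ρ x ≠ 0) (u : E2) :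
    fderiv ℝ (fun y => (ρ y)⁻¹) x u = -(ρ x^2)⁻¹ * fderiv ℝ ρ x u := by
  have : (fun y => (ρ y)⁻¹) = (fun t : ℝ => t⁻¹) ∘ ρ := rfl
  rw [this, fderiv_comp x (differentiableAt_inv hne) hρ]
  simp [fderiv_inv]
  ring

theorem fderiv_invmap (hv : DifferentiableAt ℝ v x) (hne : v x ≠ 0) (k : Fin (n+1)) (u : E2) :
    fderiv ℝ (fun y => invmap v y k) x u =
      (‖v x‖^2)⁻¹ * fderiv ℝ v x u k
        + v x k * (-((‖v x‖^2)^2)⁻¹ * (2 * ∑ m, v x m * fderiv ℝ v x u m)) := by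
  have hne2 : ‖v x‖^2 ≠ 0 := pow_ne_zero _ (norm_ne_zero_iff.mpr hne)
  have h1 : (fun y => invmap v y k) = fun y => (‖v y‖^2)⁻¹ * v y k := rfl
  rw [h1, fderiv_fun_mul (c := fun y => (‖v y‖^2)⁻¹) ((diff_normsq hv).inv hne2)
    (diff_proj hv k)]
  simp only [ContinuousLinearMap.add_apply, ContinuousLinearMap.smul_apply, smul_eq_mul]
  rw [fderiv_inv_comp (diff_normsq hv) hne2, fderiv_normsq hv, fderiv_proj hv]

theorem fderiv_f2 (hv : DifferentiableAt ℝ v x) (hw : DifferentiableAt ℝ w x)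
    (hne : v x ≠ 0) (k : Fin (n+1)) (u : E2) :
    fderiv ℝ (fun y => (w y - (2 * ⟪v y, w y⟫ / ‖v y‖ ^ 2) • v y) k) x u
      = fderiv ℝ w x u k
        - ((2 * (∑ m, v x m * fderiv ℝ w x u m + ∑ m, fderiv ℝ v x u m * w x m)) * (‖v x‖^2)⁻¹
            + (2 * ∑ m, v x m * w x m)
              * (-((‖v x‖^2)^2)⁻¹ * (2 * ∑ m, v x m * fderiv ℝ v x u m))) * v x k
        - (2 * (∑ m, v x m * w x m) * (‖v x‖^2)⁻¹) * fderiv ℝ v x u k := by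
  have hne2 : ‖v x‖^2 ≠ 0 := pow_ne_zero _ (norm_ne_zero_iff.mpr hne)
  have h1 : (fun y => (w y - (2 * ⟪v y, w y⟫ / ‖v y‖ ^ 2) • v y) k)
      = fun y => w y k - ((2 * ⟪v y, w y⟫) * ((‖v y‖^2)⁻¹)) * v y k := by
    funext y; simp [div_eq_mul_inv]
  have hc : DifferentiableAt ℝ (fun y => 2 * ⟪v y, w y⟫) x := (hv.inner ℝ hw).const_mul 2
  have hψ : DifferentiableAt ℝ (fun y => (2 * ⟪v y, w y⟫) * ((‖v y‖^2)⁻¹)) x :=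
    hc.mul ((diff_normsq hv).inv hne2)
  rw [h1, fderiv_fun_sub (g := fun y => (2 * ⟪v y, w y⟫) * ((‖v y‖^2)⁻¹) * v y k) (diff_proj hw k)
    (hψ.mul (diff_proj hv k))]
  simp only [ContinuousLinearMap.sub_apply]
  rw [fderiv_fun_mul hψ (diff_proj hv k)]
  simp only [ContinuousLinearMap.add_apply, ContinuousLinearMap.smul_apply, smul_eq_mul]
  rw [fderiv_fun_mul (d := fun y => (‖v y‖^2)⁻¹) hc ((diff_normsq hv).inv hne2)]
  simp only [ContinuousLinearMap.add_apply, ContinuousLinearMap.smul_apply, smul_eq_mul]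
  rw [fderiv_const_mul (hv.inner ℝ hw) 2]
  simp only [ContinuousLinearMap.smul_apply, smul_eq_mul]
  rw [fderiv_inner_apply ℝ hv hw, fderiv_inv_comp (diff_normsq hv) hne2, fderiv_normsq hv,
    fderiv_proj hv, fderiv_proj hw]
  simp only [PiLp.inner_apply, RCLike.inner_apply, conj_trivial]
  simp only [mul_comm ((w x) _) ((v x) _), mul_comm ((fderiv ℝ w x u) _) ((v x) _),
    mul_comm ((w x) _) ((fderiv ℝ v x u) _)]
  ring


theorem keyalg1 (m : ℕ) (V W a b : Fin m → ℝ) (r : ℝ) (hrne : r ≠ 0)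
    (hr : r = ∑ k, V k * V k) :
    (∑ k, a k * b k) / r
      - ∑ k, ∑ l, 2 / r^2 * (V l * (a k * a k) - V k * (a l * a k)) * W l
    = ∑ k, (r⁻¹ * a k + V k * (-(r^2)⁻¹ * (2 * ∑ s, V s * a s)))
        * (b k - (2 * (∑ s, V s * b s + ∑ s, a s * W s) * r⁻¹
            + (2 * ∑ s, V s * W s) * (-(r^2)⁻¹ * (2 * ∑ s, V s * a s))) * V k
          - (2 * ∑ s, V s * W s) * r⁻¹ * a k) := by
  have hX : (∑ k : Fin m, ∑ l, 2 / r^2 * (V l * (a k * a k) - V k * (a l * a k)) * W l)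
      = (2 / r^2 * (∑ s, V s * W s)) * (∑ s, a s * a s)
        - (2 / r^2 * (∑ s, a s * W s)) * (∑ s, V s * a s) := by
    calc (∑ k : Fin m, ∑ l, 2 / r^2 * (V l * (a k * a k) - V k * (a l * a k)) * W l)
        = ∑ k : Fin m, ((2 / r^2 * (∑ s, V s * W s)) * (a k * a k)
            - (2 / r^2 * (∑ s, a s * W s)) * (V k * a k)) := by
          refine Finset.sum_congr rfl fun k _ => ?_
          calc (∑ l, 2 / r^2 * (V l * (a k * a k) - V k * (a l * a k)) * W l)
              = ∑ l, ((2 / r^2 * (a k * a k)) * (V l * W l)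
                  - (2 / r^2 * (V k * a k)) * (a l * W l)) :=
                Finset.sum_congr rfl fun l _ => by ring
            _ = (2 / r^2 * (a k * a k)) * (∑ s, V s * W s)
                  - (2 / r^2 * (V k * a k)) * (∑ s, a s * W s) := by
                rw [Finset.sum_sub_distrib, ← Finset.mul_sum, ← Finset.mul_sum]
            _ = _ := by ring
      _ = _ := by
          rw [Finset.sum_sub_distrib, ← Finset.mul_sum, ← Finset.mul_sum]
  rw [hX]
  have eR : (∑ k, (r⁻¹ * a k + V k * (-(r^2)⁻¹ * (2 * ∑ s, V s * a s)))
        * (b k - (2 * (∑ s, V s * b s + ∑ s, a s * W s) * r⁻¹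
            + (2 * ∑ s, V s * W s) * (-(r^2)⁻¹ * (2 * ∑ s, V s * a s))) * V k
          - (2 * ∑ s, V s * W s) * r⁻¹ * a k))
      = r⁻¹ * (∑ s, a s * b s)
        - (r⁻¹ * ((2 * (∑ s, V s * b s + ∑ s, a s * W s) * r⁻¹
            + (2 * ∑ s, V s * W s) * (-(r^2)⁻¹ * (2 * ∑ s, V s * a s))))) * (∑ s, V s * a s)
        - (r⁻¹ * ((2 * ∑ s, V s * W s) * r⁻¹)) * (∑ s, a s * a s)
        + ((-(r^2)⁻¹ * (2 * ∑ s, V s * a s))) * (∑ s, V s * b s)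
        - ((-(r^2)⁻¹ * (2 * ∑ s, V s * a s)) * ((2 * (∑ s, V s * b s + ∑ s, a s * W s) * r⁻¹
            + (2 * ∑ s, V s * W s) * (-(r^2)⁻¹ * (2 * ∑ s, V s * a s))))) * (∑ s, V s * V s)
        - ((-(r^2)⁻¹ * (2 * ∑ s, V s * a s)) * ((2 * ∑ s, V s * W s) * r⁻¹))
            * (∑ s, V s * a s) := by
    calc _ = ∑ k : Fin m, (r⁻¹ * (a k * b k)
        - (r⁻¹ * ((2 * (∑ s, V s * b s + ∑ s, a s * W s) * r⁻¹
            + (2 * ∑ s, V s * W s) * (-(r^2)⁻¹ * (2 * ∑ s, V s * a s))))) * (V k * a k)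
        - (r⁻¹ * ((2 * ∑ s, V s * W s) * r⁻¹)) * (a k * a k)
        + ((-(r^2)⁻¹ * (2 * ∑ s, V s * a s))) * (V k * b k)
        - ((-(r^2)⁻¹ * (2 * ∑ s, V s * a s)) * ((2 * (∑ s, V s * b s + ∑ s, a s * W s) * r⁻¹
            + (2 * ∑ s, V s * W s) * (-(r^2)⁻¹ * (2 * ∑ s, V s * a s))))) * (V k * V k)
        - ((-(r^2)⁻¹ * (2 * ∑ s, V s * a s)) * ((2 * ∑ s, V s * W s) * r⁻¹))
            * (V k * a k)) := Finset.sum_congr rfl fun k _ => by ring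
      _ = _ := by
        rw [Finset.sum_sub_distrib, Finset.sum_sub_distrib, Finset.sum_add_distrib,
          Finset.sum_sub_distrib, Finset.sum_sub_distrib,
          ← Finset.mul_sum, ← Finset.mul_sum, ← Finset.mul_sum, ← Finset.mul_sum,
          ← Finset.mul_sum, ← Finset.mul_sum]
  rw [eR, ← hr]
  field_simp
  ring

theorem keyalg (m : ℕ) (V W : Fin m → ℝ) (a b : Fin m → Fin 2 → ℝ) (r : ℝ)
    (hrne : r ≠ 0) (hr : r = ∑ k, V k * V k) :
    (∑ k, ∑ i : Fin 2, a k i * b k i) / r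
      - ∑ k, ∑ l, 2 / r^2
          * (V l * ∑ i : Fin 2, a k i * a k i - V k * ∑ i : Fin 2, a l i * a k i) * W l
    = ∑ k, ∑ i : Fin 2, (r⁻¹ * a k i + V k * (-(r^2)⁻¹ * (2 * ∑ s, V s * a s i)))
        * (b k i - (2 * (∑ s, V s * b s i + ∑ s, a s i * W s) * r⁻¹
            + (2 * ∑ s, V s * W s) * (-(r^2)⁻¹ * (2 * ∑ s, V s * a s i))) * V k
          - (2 * ∑ s, V s * W s) * r⁻¹ * a k i) := by
  have h1 : (∑ k, ∑ i : Fin 2, a k i * b k i) / r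
      = ∑ i : Fin 2, (∑ k, a k i * b k i) / r := by
    rw [Finset.sum_comm, Finset.sum_div]
  have h2 : (∑ k, ∑ l, 2 / r^2
          * (V l * ∑ i : Fin 2, a k i * a k i - V k * ∑ i : Fin 2, a l i * a k i) * W l)
      = ∑ i : Fin 2, ∑ k, ∑ l,
          2 / r^2 * (V l * (a k i * a k i) - V k * (a l i * a k i)) * W l := by
    have : ∀ k l : Fin m, 2 / r^2
          * (V l * ∑ i : Fin 2, a k i * a k i - V k * ∑ i : Fin 2, a l i * a k i) * W l
        = ∑ i : Fin 2, 2 / r^2 * (V l * (a k i * a k i) - V k * (a l i * a k i)) * W l := by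
      intro k l
      rw [Finset.mul_sum, Finset.mul_sum, ← Finset.sum_sub_distrib, Finset.mul_sum,
        Finset.sum_mul]
    simp only [this]
    refine Eq.trans (Finset.sum_congr rfl fun k _ => ?_) (Finset.sum_comm)
    exact Finset.sum_comm
  rw [h1, h2, Finset.sum_comm (s := Finset.univ (α := Fin m)), ← Finset.sum_sub_distrib]
  exact Finset.sum_congr rfl fun i _ => keyalg1 m V W (fun k => a k i) (fun k => b k i) r hrne hr

theorem grad_apply (f : E2 → ℝ) (x u : E2) : ⟪gradient f x, u⟫ = fderiv ℝ f x u := by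
  simp [gradient, InnerProductSpace.toDual_symm_apply]

theorem grad_coord (f : E2 → ℝ) (x : E2) (i : Fin 2) : gradient f x i = fderiv ℝ f x (e2 i) := by
  rw [← grad_apply]
  rw [e2, EuclideanSpace.inner_single_right]; simp

theorem inner_grads (f g : E2 → ℝ) (x : E2) :
    ⟪gradient f x, gradient g x⟫ = ∑ i : Fin 2, fderiv ℝ f x (e2 i) * fderiv ℝ g x (e2 i) := by
  rw [PiLp.inner_apply]
  simp [grad_coord]
  ring



/-- **Algebraic identity underlying the reflected weak formulation.** For a smooth
nowhere-vanishing `v` and any smooth `w` on an open `U ⊆ ℝ²`, with `σ(z) = z/|z|²` and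
`X_{i,j} = 2 (v_j ∇v_i − v_i ∇v_j)/|v|⁴`, one has the pointwise identity on `U`:
`⟨∇v, ∇w⟩/|v|² − Σ_{i,j} ⟨X_{i,j}, ∇v_i⟩ w_j = ⟨∇(σ∘v), ∇(w − 2 Σ_j (v_j w_j/|v|²) v)⟩`. -/
theorem algebraic_identity_reflected_weak_formulation (n : ℕ) (hn : 2 ≤ n)
    (U : Set E2) (hU : IsOpen U) (v w : E2 → Ey n)
    (hv : ContDiffOn ℝ (⊤ : ℕ∞) v U) (hw : ContDiffOn ℝ (⊤ : ℕ∞) w U)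
    (hnv : ∀ x ∈ U, v x ≠ 0) :
    ∀ x ∈ U,
      (∑ k : Fin (n + 1),
          ⟪gradient (fun y => v y k) x, gradient (fun y => w y k) x⟫) / ‖v x‖ ^ 2
        - ∑ i : Fin (n + 1), ∑ j : Fin (n + 1),
            ⟪Xfield v i j x, gradient (fun y => v y i) x⟫ * w x j
      = ∑ k : Fin (n + 1),
          ⟪gradient (fun y => invmap v y k) x,
            gradient (fun y => (w y - (2 * ⟪v y, w y⟫ / ‖v y‖ ^ 2) • v y) k) x⟫ := by
  intro x hx
  have hvx : DifferentiableAt ℝ v x :=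
    (hv.contDiffAt (hU.mem_nhds hx)).differentiableAt (by simp)
  have hwx : DifferentiableAt ℝ w x :=
    (hw.contDiffAt (hU.mem_nhds hx)).differentiableAt (by simp)
  have hne : v x ≠ 0 := hnv x hx
  simp only [Xfield, real_inner_smul_left, inner_sub_left, inner_grads]
  simp only [fderiv_invmap hvx hne, fderiv_f2 hvx hwx hne, fderiv_proj hvx, fderiv_proj hwx]
  have hne2 : ‖v x‖^2 ≠ 0 := pow_ne_zero _ (norm_ne_zero_iff.mpr hne)
  have hr : ‖v x‖^2 = ∑ k, v x k * v x k := by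
    rw [← real_inner_self_eq_norm_sq, PiLp.inner_apply]
    simp only [RCLike.inner_apply, conj_trivial]
  simp only [show ‖v x‖^4 = (‖v x‖^2)^2 from by ring]
  exact keyalg (n+1) (fun k => v x k) (fun k => w x k)
    (fun k i => fderiv ℝ v x (e2 i) k) (fun k i => fderiv ℝ w x (e2 i) k)
    (‖v x‖^2) hne2 hr
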